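/- Let N ∈ ℕ, 1 ≤ n⁻ ≤ N, β ∈ (0,1), λ > 0, v ≥ 0, let W⁻ be a probability weighting function and let h⁻ be the loss decision weights. Then the optimal value (minimum) of the loss subproblem equals −(v/λ)^{1/β} · max_{L ∈ {1,…,n⁻}} L · ( ∑_{i=1}^{L} h⁻_i )^{−1/β}. -/

import Mathlib

open Finset

/-- An inverse S-shaped function on `[0,1]`: strictly increasing, continuously
differentiable, with a derivative strictly decreasing then strictly increasing. -/
def InverseSShaped (W : ℝ → ℝ) : Prop :=
  StrictMonoOn W (Set.Icc (0 : ℝ) 1) ∧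
  ContDiffOn ℝ 1 W (Set.Icc (0 : ℝ) 1) ∧
  ∃ x₀ ∈ Set.Icc (0 : ℝ) 1,
    StrictAntiOn (deriv W) (Set.Icc (0 : ℝ) x₀) ∧ StrictMonoOn (deriv W) (Set.Icc x₀ 1)

/-- A probability weighting function: inverse S-shaped with `W 0 = 0` and `W 1 = 1`. -/
def IsPWF (W : ℝ → ℝ) : Prop :=
  InverseSShaped W ∧ W 0 = 0 ∧ W 1 = 1

/-- Loss decision weights: `h⁻_i = W⁻(i/N) − W⁻((i−1)/N)` for `i = 1,…,n⁻`. -/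
noncomputable def lossW (W : ℝ → ℝ) (N i : ℕ) : ℝ :=
  W ((i : ℝ) / N) - W (((i : ℝ) - 1) / N)

/-- Feasibility for the loss subproblem: `y_1 ≥ y_2 ≥ … ≥ y_n ≥ 0` and `∑ h⁻_i y_i = v`. -/
def LossFeasible (W : ℝ → ℝ) (N n : ℕ) (v : ℝ) (y : ℕ → ℝ) : Prop :=
  0 ≤ y n ∧ (∀ i ∈ Finset.Icc 1 (n - 1), y (i + 1) ≤ y i) ∧
  ∑ i ∈ Finset.Icc 1 n, lossW W N i * y i = v

section AuxLemmas

private lemma aux_antitone {β t : ℝ} (hβ0 : 0 < β) (hβ1 : β < 1) (ht : 0 ≤ t) :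
    AntitoneOn (fun u : ℝ => (u + t) ^ β - u ^ β) (Set.Ici (0:ℝ)) := by
  have hder : ∀ x ∈ interior (Set.Ici (0:ℝ)),
      HasDerivAt (fun u : ℝ => (u + t) ^ β - u ^ β)
        (β * (x + t) ^ (β - 1) * 1 - β * x ^ (β - 1)) x := by
    intro x hx
    rw [interior_Ici] at hx
    have hx0 : (0:ℝ) < x := hx
    have h1 : HasDerivAt (fun u : ℝ => (u + t) ^ β) (β * (x + t) ^ (β - 1) * 1) x := by
      have hb : HasDerivAt (fun u : ℝ => u + t) 1 x := (hasDerivAt_id x).add_const t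
      have ha : HasDerivAt (fun z : ℝ => z ^ β) (β * (x + t) ^ (β - 1)) (x + t) := by
        simpa [mul_comm] using Real.hasDerivAt_rpow_const (x := x + t) (p := β)
          (Or.inl (by positivity))
      exact ha.comp x hb
    have h2 : HasDerivAt (fun u : ℝ => u ^ β) (β * x ^ (β - 1)) x := by
      simpa [mul_comm] using Real.hasDerivAt_rpow_const (x := x) (p := β) (Or.inl hx0.ne')
    exact h1.sub h2
  apply antitoneOn_of_deriv_nonpos (convex_Ici 0)
  · apply ContinuousOn.sub
    · exact ((Real.continuous_rpow_const hβ0.le).comp (continuous_add_right t)).continuousOn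
    · exact (Real.continuous_rpow_const hβ0.le).continuousOn
  · intro x hx
    exact (hder x hx).differentiableAt.differentiableWithinAt
  · intro x hx
    rw [(hder x hx).deriv]
    have hx0 : (0:ℝ) < x := by rw [interior_Ici] at hx; exact hx
    have : (x + t) ^ (β - 1) ≤ x ^ (β - 1) :=
      Real.rpow_le_rpow_of_nonpos hx0 (by linarith) (by linarith)
    nlinarith

private lemma aux_key {β s t a : ℝ} (hβ0 : 0 < β) (hβ1 : β < 1) (ht : 0 ≤ t) (ha : 0 ≤ a)
    (hs : a * t ≤ s) : (s + t) ^ β ≤ s ^ β + ((a + 1) ^ β - a ^ β) * t ^ β := by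
  have h0 : (a * t : ℝ) ∈ Set.Ici (0:ℝ) := Set.mem_Ici.mpr (by positivity)
  have hsmem : s ∈ Set.Ici (0:ℝ) := Set.mem_Ici.mpr (le_trans (by positivity) hs)
  have h := aux_antitone hβ0 hβ1 ht h0 hsmem hs
  have h1 : (a * t + t) = (a + 1) * t := by ring
  have h2 : ((a + 1) * t) ^ β = (a + 1) ^ β * t ^ β := Real.mul_rpow (by linarith) ht
  have h3 : (a * t) ^ β = a ^ β * t ^ β := Real.mul_rpow ha ht
  simp only [h1, h2, h3] at h
  nlinarith

private lemma aux_chain (y : ℕ → ℝ) (n : ℕ)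
    (hmono : ∀ i ∈ Finset.Icc 1 (n-1), y (i+1) ≤ y i) :
    ∀ i j, 1 ≤ i → i ≤ j → j ≤ n → y j ≤ y i := by
  intro i j h1 hij hjn
  induction j with
  | zero => omega
  | succ k ih =>
    rcases Nat.lt_or_ge i (k+1) with hlt | hge
    · have hik : i ≤ k := by omega
      have : y (k+1) ≤ y k := hmono k (by simp [Finset.mem_Icc]; omega)
      exact le_trans this (ih hik (by omega))
    · have : i = k + 1 := by omega
      simp [this]

private lemma aux_telescope (f : ℕ → ℝ) (i : ℕ) :
    ∀ m, i ≤ m + 1 → ∑ L ∈ Finset.Icc i m, (f L - f (L+1)) = f i - f (m+1) := by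
  intro m
  induction m with
  | zero =>
    intro h
    interval_cases i
    · simp
    · simp
  | succ m ih =>
    intro h
    rcases Nat.lt_or_ge (m+1) i with hlt | hge
    · have : i = m + 2 := by omega
      subst this
      simp
    · rw [Finset.sum_Icc_succ_top hge, ih hge]
      ring

private lemma aux_Tbound {β : ℝ} (hβ0 : 0 < β) (hβ1 : β < 1) (y : ℕ → ℝ) :
    ∀ n : ℕ, (∀ i ∈ Finset.Icc 1 n, 0 ≤ y i) →
      (∀ i j, 1 ≤ i → i ≤ j → j ≤ n → y j ≤ y i) →
      (∑ i ∈ Finset.Icc 1 n, y i ^ (1/β)) ^ β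
        ≤ ∑ i ∈ Finset.Icc 1 n, (((i:ℝ))^β - ((i:ℝ)-1)^β) * y i := by
  intro n
  induction n with
  | zero => intro _ _; simp [Real.zero_rpow hβ0.ne']
  | succ n ih =>
    intro hnn hmono
    have hnn' : ∀ i ∈ Finset.Icc 1 n, 0 ≤ y i := fun i hi => hnn i
      (by simp [Finset.mem_Icc] at hi ⊢; omega)
    have hmono' : ∀ i j, 1 ≤ i → i ≤ j → j ≤ n → y j ≤ y i :=
      fun i j h1 h2 h3 => hmono i j h1 h2 (by omega)
    have hy1 : 0 ≤ y (n+1) := hnn (n+1) (by simp)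
    set T := ∑ i ∈ Finset.Icc 1 n, y i ^ (1/β) with hT
    set t := y (n+1) ^ (1/β) with htdef
    have ht0 : 0 ≤ t := Real.rpow_nonneg hy1 _
    have hT0 : 0 ≤ T := Finset.sum_nonneg fun i hi => Real.rpow_nonneg (hnn' i hi) _
    have hnt : (n:ℝ) * t ≤ T := by
      have : ∀ i ∈ Finset.Icc 1 n, t ≤ y i ^ (1/β) := by
        intro i hi
        simp only [Finset.mem_Icc] at hi
        exact Real.rpow_le_rpow hy1 (hmono i (n+1) hi.1 (by omega) le_rfl) (by positivity)
      calc (n:ℝ) * t = (Finset.Icc 1 n).card • t := by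
            simp [Nat.card_Icc, nsmul_eq_mul]
        _ ≤ T := Finset.card_nsmul_le_sum _ _ _ this
    have hkey : (T + t) ^ β ≤ T ^ β + (((n:ℝ) + 1) ^ β - (n:ℝ) ^ β) * t ^ β :=
      aux_key hβ0 hβ1 ht0 (by positivity) hnt
    have htβ : t ^ β = y (n+1) := by
      rw [htdef, ← Real.rpow_mul hy1, one_div, inv_mul_cancel₀ hβ0.ne', Real.rpow_one]
    rw [Finset.sum_Icc_succ_top (by omega : 1 ≤ n + 1),
        Finset.sum_Icc_succ_top (by omega : 1 ≤ n + 1)]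
    have hcast : ((n+1 : ℕ):ℝ) = (n:ℝ) + 1 := by push_cast; ring
    calc (T + y (n+1) ^ (1/β)) ^ β = (T + t) ^ β := by rw [htdef]
      _ ≤ T ^ β + (((n:ℝ) + 1) ^ β - (n:ℝ) ^ β) * t ^ β := hkey
      _ ≤ (∑ i ∈ Finset.Icc 1 n, (((i:ℝ))^β - ((i:ℝ)-1)^β) * y i)
            + (((n+1:ℕ):ℝ) ^ β - (((n+1:ℕ):ℝ) - 1) ^ β) * y (n+1) := by
          rw [htβ, hcast]
          have := ih hnn' hmono'
          simp only [add_sub_cancel_right]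
          linarith

private lemma aux_abel (y : ℕ → ℝ) (m : ℕ) (g : ℕ → ℝ) :
    ∑ i ∈ Finset.Icc 1 (m+1), g i * y i
      = ∑ L ∈ Finset.Icc 1 (m+1),
          (if L = m+1 then y (m+1) else y L - y (L+1)) * ∑ i ∈ Finset.Icc 1 L, g i := by
  set c : ℕ → ℝ := fun L => if L = m+1 then y (m+1) else y L - y (L+1) with hc
  have hrep : ∀ i ∈ Finset.Icc 1 (m+1), y i = ∑ L ∈ Finset.Icc i (m+1), c L := by
    intro i hi
    simp only [Finset.mem_Icc] at hi
    rw [Finset.sum_Icc_succ_top hi.2]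
    have : ∀ L ∈ Finset.Icc i m, c L = y L - y (L+1) := by
      intro L hL
      simp only [Finset.mem_Icc] at hL
      simp [hc, Nat.ne_of_lt (by omega : L < m+1)]
    rw [Finset.sum_congr rfl this, aux_telescope y i m (by omega)]
    simp [hc]
  calc ∑ i ∈ Finset.Icc 1 (m+1), g i * y i
      = ∑ i ∈ Finset.Icc 1 (m+1), ∑ L ∈ Finset.Icc i (m+1), g i * c L := by
        refine Finset.sum_congr rfl fun i hi => ?_
        rw [hrep i hi, Finset.mul_sum]
    _ = ∑ L ∈ Finset.Icc 1 (m+1), ∑ i ∈ Finset.Icc 1 L, g i * c L := by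
        refine Finset.sum_comm' ?_
        intro i L
        simp only [Finset.mem_Icc]
        omega
    _ = ∑ L ∈ Finset.Icc 1 (m+1), c L * ∑ i ∈ Finset.Icc 1 L, g i := by
        refine Finset.sum_congr rfl fun L hL => ?_
        rw [← Finset.sum_mul, mul_comm]

private lemma aux_Asum {β : ℝ} (hβ0 : 0 < β) (L : ℕ) :
    ∑ i ∈ Finset.Icc 1 L, (((i:ℝ))^β - ((i:ℝ)-1)^β) = (L:ℝ)^β := by
  have : ∀ i ∈ Finset.Icc 1 L, (((i:ℝ))^β - ((i:ℝ)-1)^β)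
      = ((i:ℕ):ℝ)^β - (((i-1:ℕ)):ℝ)^β := by
    intro i hi
    simp only [Finset.mem_Icc] at hi
    have : ((i:ℝ) - 1) = ((i-1:ℕ):ℝ) := by
      have := hi.1
      push_cast [Nat.cast_sub this]
      ring
    rw [this]
  rw [Finset.sum_congr rfl this, ← Finset.Ico_add_one_right_eq_Icc, Finset.sum_Ico_eq_sum_range]
  simp only [Nat.add_sub_cancel]
  have : ∀ j ∈ Finset.range L, ((1+j:ℕ):ℝ)^β - (((1+j-1:ℕ)):ℝ)^β
      = ((j+1:ℕ):ℝ)^β - ((j:ℕ):ℝ)^β := by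
    intro j hj
    have h1 : 1 + j - 1 = j := by omega
    have h2 : 1 + j = j + 1 := by omega
    rw [h1, h2]
  rw [Finset.sum_congr rfl this, Finset.sum_range_sub (fun j => ((j:ℕ):ℝ)^β) L]
  simp [Real.zero_rpow hβ0.ne']

end AuxLemmas

/-- the optimal value (minimum) of the loss subproblem equals
`−(v/λ)^{1/β} · max_{L ∈ {1,…,n}} L·(∑_{i≤L} h⁻_i)^{−1/β}`. -/
theorem loss_subproblem_optimal_value (W : ℝ → ℝ) (N n : ℕ) (β lam v : ℝ)
    (hW : IsPWF W) (hn1 : 1 ≤ n) (hnN : n ≤ N)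
    (hβ0 : 0 < β) (hβ1 : β < 1) (hlam : 0 < lam) (hv : 0 ≤ v) :
    IsLeast {S : ℝ | ∃ y : ℕ → ℝ, LossFeasible W N n v y ∧
        S = -∑ i ∈ Finset.Icc 1 n, (y i / lam) ^ (1 / β)}
      (-(v / lam) ^ (1 / β) *
        (Finset.Icc 1 n).sup' (Finset.nonempty_Icc.mpr hn1)
          (fun L => (L : ℝ) * (∑ i ∈ Finset.Icc 1 L, lossW W N i) ^ (-(1 / β)))) := by
  obtain ⟨⟨hWmono, -, -⟩, hW0, hW1⟩ := hW
  have hN1 : 1 ≤ N := le_trans hn1 hnN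
  have hN0 : (0:ℝ) < (N:ℝ) := by exact_mod_cast Nat.lt_of_lt_of_le Nat.zero_lt_one hN1
  have hpos : ∀ i, 1 ≤ i → i ≤ N → 0 < lossW W N i := by
    intro i h1 hiN
    have hiR : (1:ℝ) ≤ (i:ℝ) := by exact_mod_cast h1
    have hiNR : (i:ℝ) ≤ (N:ℝ) := by exact_mod_cast hiN
    have hx1 : ((i:ℝ)-1)/N ∈ Set.Icc (0:ℝ) 1 := by
      constructor
      · apply div_nonneg _ hN0.le; linarith
      · rw [div_le_one hN0]; linarith
    have hx2 : (i:ℝ)/N ∈ Set.Icc (0:ℝ) 1 := by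
      constructor
      · positivity
      · rw [div_le_one hN0]; exact hiNR
    have hlt : ((i:ℝ)-1)/N < (i:ℝ)/N := by
      exact (div_lt_div_iff_of_pos_right hN0).mpr (by linarith)
    exact sub_pos.mpr (hWmono hx1 hx2 hlt)
  set H : ℕ → ℝ := fun L => ∑ i ∈ Finset.Icc 1 L, lossW W N i with hHdef
  have hHpos : ∀ L, 1 ≤ L → L ≤ N → 0 < H L := by
    intro L h1 hLN
    apply Finset.sum_pos
    · intro i hi
      simp only [Finset.mem_Icc] at hi
      exact hpos i hi.1 (le_trans hi.2 hLN)
    · exact Finset.nonempty_Icc.mpr h1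
  set ne' := Finset.nonempty_Icc.mpr hn1 with hne
  set f : ℕ → ℝ := fun L => (L:ℝ) * (H L) ^ (-(1/β)) with hfdef
  set M := (Finset.Icc 1 n).sup' ne' f with hMdef
  have hmemN : ∀ L ∈ Finset.Icc 1 n, 1 ≤ L ∧ L ≤ N := by
    intro L hL
    simp only [Finset.mem_Icc] at hL
    exact ⟨hL.1, le_trans hL.2 hnN⟩
  have hfpos : ∀ L ∈ Finset.Icc 1 n, 0 < f L := by
    intro L hL
    obtain ⟨h1, hN⟩ := hmemN L hL
    have h1R : (0:ℝ) < (L:ℝ) := by exact_mod_cast Nat.lt_of_lt_of_le Nat.zero_lt_one h1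
    exact mul_pos h1R (Real.rpow_pos_of_pos (hHpos L h1 hN) _)
  have hnmem : n ∈ Finset.Icc 1 n := by simp [Finset.mem_Icc]; omega
  have hM0 : 0 < M := lt_of_lt_of_le (hfpos n hnmem) (Finset.le_sup' f hnmem)
  have hLM : ∀ L ∈ Finset.Icc 1 n, ((L:ℝ))^β ≤ M^β * H L := by
    intro L hL
    obtain ⟨h1, hN⟩ := hmemN L hL
    have hHL : 0 < H L := hHpos L h1 hN
    have hHp : 0 < (H L)^(1/β) := Real.rpow_pos_of_pos hHL _
    have h1' : (L:ℝ) ≤ M * (H L)^(1/β) := by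
      have hle : f L ≤ M := Finset.le_sup' f hL
      have hrw : (H L)^(-(1/β)) = ((H L)^(1/β))⁻¹ := Real.rpow_neg hHL.le _
      calc (L:ℝ) = ((L:ℝ) * (H L)^(-(1/β))) * (H L)^(1/β) := by
            rw [hrw]; field_simp
        _ ≤ M * (H L)^(1/β) := mul_le_mul_of_nonneg_right hle hHp.le
    calc ((L:ℝ))^β ≤ (M * (H L)^(1/β))^β :=
          Real.rpow_le_rpow (by positivity) h1' hβ0.le
      _ = M^β * ((H L)^(1/β))^β := Real.mul_rpow hM0.le hHp.le
      _ = M^β * H L := by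
          rw [← Real.rpow_mul hHL.le, one_div, inv_mul_cancel₀ hβ0.ne', Real.rpow_one]
  have hp_ne : (1/β : ℝ) ≠ 0 := by positivity
  constructor
  · -- membership
    obtain ⟨L₀, hL₀mem, hML₀⟩ := Finset.exists_mem_eq_sup' ne' f
    obtain ⟨h1L₀, hL₀n⟩ : 1 ≤ L₀ ∧ L₀ ≤ n := by
      simpa [Finset.mem_Icc] using hL₀mem
    have hHL₀ : 0 < H L₀ := hHpos L₀ h1L₀ (le_trans hL₀n hnN)
    have hsub : Finset.Icc 1 L₀ ⊆ Finset.Icc 1 n := Finset.Icc_subset_Icc_right hL₀n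
    refine ⟨fun i => if i ≤ L₀ then v / H L₀ else 0, ⟨?_, ?_, ?_⟩, ?_⟩
    · dsimp only
      split_ifs
      · exact div_nonneg hv hHL₀.le
      · exact le_refl 0
    · intro i hi
      dsimp only
      by_cases h1 : i + 1 ≤ L₀
      · have h2 : i ≤ L₀ := by omega
        simp [h1, h2]
      · by_cases h2 : i ≤ L₀
        · simp only [if_neg h1, if_pos h2]
          exact div_nonneg hv hHL₀.le
        · simp [h1, h2]
    · rw [← Finset.sum_subset hsub ?van]
      case van =>
        intro x hx hxn
        simp only [Finset.mem_Icc] at hx hxn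
        have : ¬ (x ≤ L₀) := by omega
        simp [this]
      calc ∑ i ∈ Finset.Icc 1 L₀, lossW W N i * (if i ≤ L₀ then v / H L₀ else 0)
          = ∑ i ∈ Finset.Icc 1 L₀, lossW W N i * (v / H L₀) := by
            refine Finset.sum_congr rfl fun i hi => ?_
            simp only [Finset.mem_Icc] at hi
            rw [if_pos hi.2]
        _ = H L₀ * (v / H L₀) := by rw [hHdef, ← Finset.sum_mul]
        _ = v := by field_simp
    · have hval : ∑ i ∈ Finset.Icc 1 n, ((if i ≤ L₀ then v / H L₀ else 0) / lam) ^ (1/β)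
          = (L₀ : ℝ) * ((v / lam) ^ (1/β) * (H L₀) ^ (-(1/β))) := by
        rw [← Finset.sum_subset hsub ?van2]
        case van2 =>
          intro x hx hxn
          simp only [Finset.mem_Icc] at hx hxn
          have : ¬ (x ≤ L₀) := by omega
          simp only [if_neg this, zero_div]
          exact Real.zero_rpow hp_ne
        have hterm : ((v / H L₀) / lam) ^ (1/β)
            = (v / lam) ^ (1/β) * (H L₀) ^ (-(1/β)) := by
          have : v / H L₀ / lam = (v / lam) * (H L₀)⁻¹ := by
            rw [div_div, mul_comm, ← div_div, div_eq_mul_inv]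
          rw [this, Real.mul_rpow (by positivity) (inv_nonneg.mpr hHL₀.le),
            Real.inv_rpow hHL₀.le, ← Real.rpow_neg hHL₀.le]
        calc ∑ i ∈ Finset.Icc 1 L₀, ((if i ≤ L₀ then v / H L₀ else 0) / lam) ^ (1/β)
            = ∑ i ∈ Finset.Icc 1 L₀, ((v / lam) ^ (1/β) * (H L₀) ^ (-(1/β))) := by
              refine Finset.sum_congr rfl fun i hi => ?_
              simp only [Finset.mem_Icc] at hi
              rw [if_pos hi.2, hterm]
          _ = (L₀ : ℝ) * ((v / lam) ^ (1/β) * (H L₀) ^ (-(1/β))) := by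
              rw [Finset.sum_const, Nat.card_Icc, nsmul_eq_mul]
              norm_num
      rw [hval, hMdef, hML₀]
      simp only [hfdef]
      ring
  · -- lower bound
    rintro S ⟨y, ⟨hy0, hymono, hysum⟩, rfl⟩
    have hch := aux_chain y n hymono
    have hynn : ∀ i ∈ Finset.Icc 1 n, 0 ≤ y i := by
      intro i hi
      simp only [Finset.mem_Icc] at hi
      exact le_trans hy0 (hch i n hi.1 hi.2 le_rfl)
    obtain ⟨m, rfl⟩ : ∃ m, n = m + 1 := ⟨n - 1, by omega⟩
    set T := ∑ i ∈ Finset.Icc 1 (m+1), y i ^ (1/β) with hTdef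
    have hT0 : 0 ≤ T := Finset.sum_nonneg fun i hi => Real.rpow_nonneg (hynn i hi) _
    set c : ℕ → ℝ := fun L => if L = m+1 then y (m+1) else y L - y (L+1) with hcdef
    have hcnn : ∀ L ∈ Finset.Icc 1 (m+1), 0 ≤ c L := by
      intro L hL
      simp only [Finset.mem_Icc] at hL
      by_cases hLn : L = m+1
      · simp only [hcdef, if_pos hLn]
        exact hy0
      · simp only [hcdef, if_neg hLn]
        have := hch L (L+1) hL.1 (by omega) (by omega)
        linarith
    have habel1 : v = ∑ L ∈ Finset.Icc 1 (m+1), c L * H L := by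
      rw [← hysum]
      exact aux_abel y m (lossW W N)
    have habel2 : ∑ i ∈ Finset.Icc 1 (m+1), (((i:ℝ))^β - ((i:ℝ)-1)^β) * y i
        = ∑ L ∈ Finset.Icc 1 (m+1), c L * (L:ℝ)^β := by
      rw [aux_abel y m (fun i => ((i:ℝ))^β - ((i:ℝ)-1)^β)]
      exact Finset.sum_congr rfl fun L hL => by rw [aux_Asum hβ0 L]
    have hstep : ∑ L ∈ Finset.Icc 1 (m+1), c L * (L:ℝ)^β ≤ M^β * v := by
      rw [habel1, Finset.mul_sum]
      apply Finset.sum_le_sum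
      intro L hL
      have h1 := hLM L hL
      have hc := hcnn L hL
      calc c L * (L:ℝ)^β ≤ c L * (M^β * H L) := mul_le_mul_of_nonneg_left h1 hc
        _ = M^β * (c L * H L) := by ring
    have hTb : T ^ β ≤ M^β * v := by
      refine le_trans (aux_Tbound hβ0 hβ1 y (m+1) hynn hch) ?_
      rw [habel2]
      exact hstep
    have hTle : T ≤ M * v ^ (1/β) := by
      have h1 : (T ^ β) ^ (1/β) ≤ (M^β * v) ^ (1/β) :=
        Real.rpow_le_rpow (by positivity) hTb (by positivity)
      have h2 : (T ^ β) ^ (1/β) = T := by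
        rw [← Real.rpow_mul hT0, one_div, mul_inv_cancel₀ hβ0.ne', Real.rpow_one]
      have h3 : (M^β * v) ^ (1/β) = M * v ^ (1/β) := by
        rw [Real.mul_rpow (by positivity) hv, ← Real.rpow_mul hM0.le, one_div,
          mul_inv_cancel₀ hβ0.ne', Real.rpow_one]
      rw [h2, h3] at h1
      exact h1
    have hsum : ∑ i ∈ Finset.Icc 1 (m+1), (y i / lam) ^ (1/β) = T / lam ^ (1/β) := by
      rw [hTdef, Finset.sum_div]
      refine Finset.sum_congr rfl fun i hi => ?_
      rw [Real.div_rpow (hynn i hi) hlam.le]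
    have hgoal : ∑ i ∈ Finset.Icc 1 (m+1), (y i / lam) ^ (1/β) ≤ (v / lam) ^ (1/β) * M := by
      have hlamp : 0 < lam ^ (1/β) := Real.rpow_pos_of_pos hlam _
      rw [hsum, Real.div_rpow hv hlam.le, div_le_iff₀ hlamp]
      calc T ≤ M * v ^ (1/β) := hTle
        _ = v ^ (1/β) / lam ^ (1/β) * M * lam ^ (1/β) := by
            field_simp
    linarith
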